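/- arXiv:2102.10851 — 2 statements merged into one kernel-verified Lean document; each statement's English description precedes it below -/
import Mathlib

section
/- For all natural numbers s and r, A(s,r,0) equals the r-th derivative of the function t ↦ (cosh t)^s evaluated at t = 0; that is, (A(s,r,0) : ℝ) = iteratedDeriv r (fun t : ℝ => (cosh t)^s) 0. -/
/-- The triangular array `A(s,r,j)`: `A(s,0,j) = δ_{j,0}` and
`A(s,r+1,j) = (s-(j-1))·A(s,r,j-1) + (j+1)·A(s,r,j+1)`. -/
def A (s : ℕ) : ℕ → ℤ → ℤ
  | 0, j => if j = 0 then 1 else 0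
  | r + 1, j => ((s : ℤ) - (j - 1)) * A s r (j - 1) + (j + 1) * A s r (j + 1)

/-- `A(s,r,j) = 0` for negative `j`. -/
lemma A_neg (s : ℕ) : ∀ (r : ℕ) (j : ℤ), j < 0 → A s r j = 0
  | 0, j, hj => by simp [A, hj.ne]
  | r+1, j, hj => by
    rcases lt_or_eq_of_le (by omega : j + 1 ≤ 0) with h | h
    · simp [A, A_neg s r (j-1) (by omega), A_neg s r (j+1) h]
    · simp [A, A_neg s r (j-1) (by omega), show j + 1 = 0 by omega]

/-- `A(s,r,j) = 0` for `j > r`. -/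
lemma A_gt (s : ℕ) : ∀ (r : ℕ) (j : ℤ), (r : ℤ) < j → A s r j = 0
  | 0, j, hj => by simp [A]; omega
  | r+1, j, hj => by
    simp [A, A_gt s r (j-1) (by push_cast at hj ⊢; omega),
      A_gt s r (j+1) (by push_cast at hj ⊢; omega)]

/-- The key reindexing identity expressing the recursion for `A`. -/
lemma sum_step (s r : ℕ) (C S : ℝ) (hC : C ≠ 0) :
    ∑ j ∈ Finset.range (r+1), (A s r (j:ℤ) : ℝ) *
      ((((s:ℤ) - (j:ℤ) : ℤ) : ℝ) * C ^ ((s:ℤ) - j - 1) * S * S ^ j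
        + C ^ ((s:ℤ) - j) * ((j:ℝ) * S ^ (j - 1) * C))
    = ∑ j ∈ Finset.range (r+2), (A s (r+1) (j:ℤ) : ℝ) * C ^ ((s:ℤ) - j) * S ^ j := by
  have hrec : ∀ j : ℕ, (A s (r+1) (j:ℤ) : ℝ) * C ^ ((s:ℤ) - j) * S ^ j
      = (((s:ℤ) - ((j:ℤ)-1) : ℤ) : ℝ) * (A s r ((j:ℤ)-1) : ℝ) * C ^ ((s:ℤ) - j) * S ^ j
        + ((j:ℝ)+1) * (A s r ((j:ℤ)+1) : ℝ) * C ^ ((s:ℤ) - j) * S ^ j := by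
    intro j
    show ((A s (r+1) (j:ℤ) : ℤ) : ℝ) * _ * _ = _
    rw [A]
    push_cast
    ring
  rw [Finset.sum_congr rfl fun j _ => hrec j, Finset.sum_add_distrib]
  have hB : ∑ j ∈ Finset.range (r+2),
      (((s:ℤ) - ((j:ℤ)-1) : ℤ) : ℝ) * (A s r ((j:ℤ)-1) : ℝ) * C ^ ((s:ℤ) - j) * S ^ j
      = ∑ j ∈ Finset.range (r+1),
        (A s r (j:ℤ) : ℝ) * ((((s:ℤ) - (j:ℤ) : ℤ) : ℝ) * C ^ ((s:ℤ) - j - 1) * S * S ^ j) := by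
    rw [Finset.sum_range_succ']
    have h0 : (A s r ((0:ℤ)-1) : ℝ) = 0 := by
      norm_num [A_neg s r (-1) (by norm_num)]
    simp only [Nat.cast_zero, h0, mul_zero, zero_mul, add_zero]
    refine Finset.sum_congr rfl fun j _ => ?_
    push_cast
    rw [show (s:ℤ) - ((j:ℤ)+1) = (s:ℤ) - (j:ℤ) - 1 from by ring, pow_succ]
    ring
  have hD : ∑ j ∈ Finset.range (r+2),
      ((j:ℝ)+1) * (A s r ((j:ℤ)+1) : ℝ) * C ^ ((s:ℤ) - j) * S ^ j
      = ∑ j ∈ Finset.range (r+1),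
        (A s r (j:ℤ) : ℝ) * (C ^ ((s:ℤ) - j) * ((j:ℝ) * S ^ (j - 1) * C)) := by
    rw [Finset.sum_range_succ, Finset.sum_range_succ]
    push_cast
    rw [A_gt s r ((r:ℤ)+1) (by omega), A_gt s r ((r:ℤ)+1+1) (by omega)]
    norm_num
    rw [Finset.sum_range_succ']
    norm_num
    refine Finset.sum_congr rfl fun j _ => ?_
    rw [show (s:ℤ) - ((j:ℤ)+1) = (s:ℤ) - (j:ℤ) - 1 from by ring, zpow_sub_one₀ hC]
    field_simp
  rw [hB, hD, ← Finset.sum_add_distrib]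
  refine Finset.sum_congr rfl fun j _ => ?_
  ring

/-- The sum formula has the expected derivative. -/
lemma hasDeriv_F (s r : ℕ) (t : ℝ) :
    HasDerivAt (fun t : ℝ => ∑ j ∈ Finset.range (r+1),
        (A s r (j:ℤ) : ℝ) * Real.cosh t ^ ((s:ℤ) - j) * Real.sinh t ^ j)
      (∑ j ∈ Finset.range (r+2),
        (A s (r+1) (j:ℤ) : ℝ) * Real.cosh t ^ ((s:ℤ) - j) * Real.sinh t ^ j) t := by
  rw [← sum_step s r _ _ (Real.cosh_pos t).ne']
  apply HasDerivAt.fun_sum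
  intro j _
  have h1 : HasDerivAt (fun t : ℝ => Real.cosh t ^ ((s:ℤ) - j))
      ((((s:ℤ) - j : ℤ) : ℝ) * Real.cosh t ^ ((s:ℤ) - j - 1) * Real.sinh t) t := by
    have := (hasDerivAt_zpow ((s:ℤ) - j) (Real.cosh t)
      (Or.inl (Real.cosh_pos t).ne')).comp t (Real.hasDerivAt_cosh t)
    simpa [mul_assoc, Function.comp_def] using this
  have h2 : HasDerivAt (fun t : ℝ => Real.sinh t ^ j)
      ((j:ℝ) * Real.sinh t ^ (j - 1) * Real.cosh t) t := by
    have := (hasDerivAt_pow j (Real.sinh t)).comp t (Real.hasDerivAt_sinh t)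
    simpa [mul_assoc, Function.comp_def] using this
  have h3 := ((h1.mul h2).const_mul ((A s r (j:ℤ) : ℤ) : ℝ))
  simpa [mul_assoc] using h3

/-- Closed form for the iterated derivatives of `cosh ^ s`. -/
lemma iter_eq (s : ℕ) : ∀ r : ℕ, iteratedDeriv r (fun t : ℝ => Real.cosh t ^ s)
    = fun t => ∑ j ∈ Finset.range (r+1),
        (A s r (j:ℤ) : ℝ) * Real.cosh t ^ ((s:ℤ) - j) * Real.sinh t ^ j
  | 0 => by
    funext t
    rw [iteratedDeriv_zero]
    norm_num [A, Finset.sum_range_one, zpow_natCast]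
  | r + 1 => by
    rw [iteratedDeriv_succ, iter_eq s r]
    funext t
    exact (hasDeriv_F s r t).deriv

/-- `A(s,r,0)` equals the `r`-th derivative of `cosh(t)^s` at `t = 0`. -/
theorem stmt5 (s r : ℕ) :
    (A s r 0 : ℝ) = iteratedDeriv r (fun t : ℝ => Real.cosh t ^ s) 0 := by
  rw [iter_eq s r]
  beta_reduce
  rw [Finset.sum_eq_single_of_mem 0 (by simp)]
  · simp
  · intro b _ hb
    simp [zero_pow hb, Real.sinh_zero]
end

section
/- For all natural numbers r and i with 0 ≤ i ≤ r, the following identity holds in ℚ: Σ_{j≥0} (r)_j · ( Σ_{n≥0} φ(n, i−n, j−2n) ) = S(r, r−i), where S(r, r−i) is the Stirling number of the second kind and all sums are finite since φ vanishes outside 0 ≤ k ≤ j ≤ n. -/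
/-- Auxiliary array realizing the triangular field `φ` on natural-number indices. -/
def phiN : ℕ → ℕ → ℕ → ℚ
  | 0, j, k => if j = 0 ∧ k = 0 then 1 else 0
  | n + 1, j, k =>
    if k ≤ j ∧ j ≤ n + 1 then
      ((if _hk : k = 0 then 0 else ((n : ℚ) + 2 - (j : ℚ)) * phiN (n + 1) (j - 1) (k - 1))
        + ((k : ℚ) + 1) * phiN n j (k + 1) + phiN n j k) / (2 * ((n : ℚ) + 1) + (k : ℚ))
    else 0
termination_by n j k => (n, j)

/-- The triangular field `φ(n,j,k)` of rational numbers: `φ(n,j,k) = 0` unless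
`0 ≤ k ≤ j ≤ n`, `φ(0,0,0) = 1`, and for `0 ≤ k ≤ j ≤ n` with `(n,j,k) ≠ (0,0,0)`,
`(2n+k)·φ(n,j,k) = (n-j+1)·φ(n,j-1,k-1) + (k+1)·φ(n-1,j,k+1) + φ(n-1,j,k)`. -/
def phi (n j k : ℤ) : ℚ :=
  if 0 ≤ n ∧ 0 ≤ j ∧ 0 ≤ k then phiN n.toNat j.toNat k.toNat else 0

/-- Stirling numbers of the second kind: `S(0,0) = 1`, `S(m,l) = 0` for `l > m`,
and `S(m+1,l) = l·S(m,l) + S(m,l-1)`. -/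
def S2 : ℕ → ℕ → ℕ
  | 0, 0 => 1
  | 0, _ + 1 => 0
  | _ + 1, 0 => 0
  | m + 1, l + 1 => (l + 1) * S2 m (l + 1) + S2 m l

lemma phiN_eq_zero {n j k : ℕ} (h : ¬(k ≤ j ∧ j ≤ n)) : phiN n j k = 0 := by
  cases n with
  | zero =>
    rw [phiN]
    rw [if_neg]
    rintro ⟨rfl, rfl⟩
    exact h ⟨le_refl _, le_refl _⟩
  | succ m =>
    rw [phiN, if_neg h]

lemma phi_eq_zero {n j k : ℤ} (h : ¬(0 ≤ k ∧ k ≤ j ∧ j ≤ n)) : phi n j k = 0 := by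
  unfold phi
  split
  · next hc =>
    exact phiN_eq_zero (by omega)
  · rfl

lemma phi_eq_phiN {n j k : ℤ} (hn : 0 ≤ n) (hj : 0 ≤ j) (hk : 0 ≤ k) :
    phi n j k = phiN n.toNat j.toNat k.toNat := by
  unfold phi; rw [if_pos ⟨hn, hj, hk⟩]

lemma phi_congr {a b c a' b' c' : ℤ} (ha : a = a') (hb : b = b') (hc : c = c') :
    phi a b c = phi a' b' c' := by rw [ha, hb, hc]


lemma phi_rec (n j k : ℤ) :
    (2*n + k) * phi n j k
      = (n - j + 1) * phi n (j-1) (k-1) + (k+1) * phi (n-1) j (k+1) + phi (n-1) j k := by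
  by_cases hreg : 0 ≤ k ∧ k ≤ j ∧ j ≤ n
  · obtain ⟨hk, hkj, hjn⟩ := hreg
    rcases eq_or_lt_of_le (show (0:ℤ) ≤ n by omega) with h0 | h1
    · -- n = 0, hence j = k = 0
      obtain rfl : n = 0 := h0.symm
      obtain rfl : j = 0 := by omega
      obtain rfl : k = 0 := by omega
      rw [phi_eq_zero (n := 0) (j := 0-1) (k := 0-1) (by omega),
          phi_eq_zero (n := 0-1) (j := 0) (k := 0+1) (by omega),
          phi_eq_zero (n := 0-1) (j := 0) (k := 0) (by omega)]
      ring
    · -- n ≥ 1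
      obtain ⟨K, rfl⟩ : ∃ K : ℕ, k = (K:ℤ) := ⟨k.toNat, by omega⟩
      obtain ⟨J, rfl⟩ : ∃ J : ℕ, j = (J:ℤ) := ⟨j.toNat, by omega⟩
      obtain ⟨N, rfl⟩ : ∃ N : ℕ, n = (N:ℤ) + 1 := ⟨(n-1).toNat, by omega⟩
      have h1 : phi ((N:ℤ)+1) J K = phiN (N+1) J K := by
        rw [phi_eq_phiN (by omega) (by omega) (by omega)]; congr 1 <;> omega
      have h2 : phi ((N:ℤ)+1-1) J ((K:ℤ)+1) = phiN N J (K+1) := by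
        rw [phi_eq_phiN (by omega) (by omega) (by omega)]; congr 1 <;> omega
      have h3 : phi ((N:ℤ)+1-1) J K = phiN N J K := by
        rw [phi_eq_phiN (by omega) (by omega) (by omega)]; congr 1 <;> omega
      have hJN : K ≤ J ∧ J ≤ N + 1 := by omega
      have hden : (2 * ((N:ℚ) + 1) + (K:ℚ)) ≠ 0 := by positivity
      rw [h1, h2, h3, phiN, if_pos hJN]
      have hlhs : (2*(((N:ℤ)+1 : ℤ):ℚ) + ((K:ℤ):ℚ)) = 2 * ((N:ℚ) + 1) + (K:ℚ) := by
        push_cast; ring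
      rw [hlhs, mul_div_cancel₀ _ hden]
      by_cases hK0 : K = 0
      · rw [dif_pos hK0]
        rw [phi_eq_zero (n := (N:ℤ)+1) (j := (J:ℤ)-1) (k := (K:ℤ)-1) (by omega)]
        push_cast [hK0]
        ring
      · rw [dif_neg hK0]
        have h4 : phi ((N:ℤ)+1) ((J:ℤ)-1) ((K:ℤ)-1) = phiN (N+1) (J-1) (K-1) := by
          rw [phi_eq_phiN (by omega) (by omega) (by omega)]; congr 1 <;> omega
        rw [h4]
        have hco : (((N:ℤ)+1 : ℤ):ℚ) - ((J:ℤ):ℚ) + 1 = (N:ℚ) + 2 - (J:ℚ) := by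
          push_cast; ring
        push_cast
        ring
  · rw [phi_eq_zero hreg]
    push_neg at hreg
    by_cases hk : 0 ≤ k
    · by_cases hkj : k ≤ j
      · -- then j > n
        have hjn : n < j := hreg hk hkj
        rw [phi_eq_zero (n := n-1) (j := j) (k := k+1) (by omega),
            phi_eq_zero (n := n-1) (j := j) (k := k) (by omega)]
        by_cases hje : j = n + 1
        · have hc : (n:ℚ) - (j:ℚ) + 1 = 0 := by rw [hje]; push_cast; ring
          rw [hc]
          ring
        · rw [phi_eq_zero (n := n) (j := j-1) (k := k-1) (by omega)]
          ring
      · push_neg at hkj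
        rw [phi_eq_zero (n := n) (j := j-1) (k := k-1) (by omega),
            phi_eq_zero (n := n-1) (j := j) (k := k+1) (by omega),
            phi_eq_zero (n := n-1) (j := j) (k := k) (by omega)]
        ring
    · push_neg at hk
      rw [phi_eq_zero (n := n) (j := j-1) (k := k-1) (by omega),
          phi_eq_zero (n := n-1) (j := j) (k := k) (by omega)]
      by_cases hke : k = -1
      · have hc : (k:ℚ) + 1 = 0 := by rw [hke]; norm_num
        rw [hc]
        ring
      · rw [phi_eq_zero (n := n-1) (j := j) (k := k+1) (by omega)]
        ring

noncomputable def G (i j : ℤ) : ℚ := ∑ᶠ n : ℕ, phi (n : ℤ) (i - (n : ℤ)) (j - 2 * (n : ℤ))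

lemma G_term_zero {i j : ℤ} {n : ℕ} (h : i < (n:ℤ)) :
    phi (n : ℤ) (i - n) (j - 2 * n) = 0 :=
  phi_eq_zero (by omega)

lemma G_eq_sum (i j : ℤ) (M : ℕ) (h : i < (M:ℤ)) :
    G i j = ∑ n ∈ Finset.range M, phi (n : ℤ) (i - n) (j - 2 * n) := by
  apply finsum_eq_sum_of_support_subset
  intro n hn
  simp only [Function.mem_support] at hn
  simp only [Finset.coe_range, Set.mem_Iio]
  by_contra hc
  exact hn (G_term_zero (by omega))

lemma G_neg_j {i j : ℤ} (h : j < 0) : G i j = 0 := by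
  rw [G_eq_sum i j (i.toNat + 1) (by omega)]
  apply Finset.sum_eq_zero
  intro n _
  exact phi_eq_zero (by omega)

lemma G_neg_i {i j : ℤ} (h : i < 0) : G i j = 0 := by
  rw [G_eq_sum i j 1 (by omega)]
  apply Finset.sum_eq_zero
  intro n _
  exact phi_eq_zero (by omega)

lemma G_zero (i : ℤ) : G i 0 = if i = 0 then 1 else 0 := by
  rw [G_eq_sum i 0 (i.toNat + 1) (by omega), Finset.sum_eq_single 0]
  · simp only [Nat.cast_zero, sub_zero, mul_zero]
    by_cases h : i = 0
    · subst h
      rw [if_pos rfl, phi_eq_phiN le_rfl le_rfl le_rfl]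
      simp [phiN]
    · rw [if_neg h]
      rcases lt_or_gt_of_ne h with h' | h'
      · exact phi_eq_zero (by omega)
      · rw [phi_eq_phiN (by omega) (by omega) (by omega)]
        exact phiN_eq_zero (by omega)
  · intro n _ hn
    exact phi_eq_zero (by omega)
  · intro h
    simp at h

lemma G_rec (i j : ℤ) :
    j * G i j = (j - i) * G (i-1) (j-1) + G (i-1) (j-2) := by
  set M : ℕ := i.toNat + 1 with hM
  rw [G_eq_sum i j (M+1) (by omega), G_eq_sum (i-1) (j-1) M (by omega),
      G_eq_sum (i-1) (j-2) M (by omega), Finset.mul_sum]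
  have key : ∀ n : ℕ, j * phi (n:ℤ) (i - n) (j - 2*n)
      = (2*(n:ℤ) - i + 1) * phi (n:ℤ) (i - n - 1) (j - 2*n - 1)
        + ((j - 2*(n:ℤ) + 1) * phi ((n:ℤ)-1) (i - n) (j - 2*n + 1)
            + phi ((n:ℤ)-1) (i - n) (j - 2*n)) := by
    intro n
    have h := phi_rec (n:ℤ) (i - n) (j - 2*n)
    push_cast at h ⊢
    linear_combination h
  rw [Finset.sum_congr rfl (fun n _ => key n), Finset.sum_add_distrib]
  -- first sum: drop last term
  have hS1 : ∑ n ∈ Finset.range (M+1),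
      (2*(n:ℤ) - i + 1) * phi (n:ℤ) (i - n - 1) (j - 2*n - 1)
      = ∑ n ∈ Finset.range M, (2*(n:ℤ) - i + 1) * phi (n:ℤ) (i - n - 1) (j - 2*n - 1) := by
    rw [Finset.sum_range_succ]
    have : phi (M:ℤ) (i - M - 1) (j - 2*M - 1) = 0 := phi_eq_zero (by omega)
    rw [this, mul_zero, add_zero]
  have hS2 : ∑ n ∈ Finset.range (M+1),
      ((j - 2*(n:ℤ) + 1) * phi ((n:ℤ)-1) (i - n) (j - 2*n + 1)
        + phi ((n:ℤ)-1) (i - n) (j - 2*n))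
      = ∑ n ∈ Finset.range M,
          ((j - 2*(n:ℤ) - 1) * phi (n:ℤ) (i - 1 - n) (j - 1 - 2*n)
            + phi (n:ℤ) (i - 1 - n) (j - 2 - 2*n)) := by
    rw [Finset.sum_range_succ']
    have h0 : ((j - 2*((0:ℕ):ℤ) + 1) * phi (((0:ℕ):ℤ)-1) (i - (0:ℕ)) (j - 2*(0:ℕ) + 1)
        + phi (((0:ℕ):ℤ)-1) (i - (0:ℕ)) (j - 2*(0:ℕ))) = 0 := by
      rw [phi_eq_zero (by push_cast; omega), phi_eq_zero (by push_cast; omega)]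
      ring
    rw [h0, add_zero]
    apply Finset.sum_congr rfl
    intro n _
    have e1 : phi ((((n+1):ℕ):ℤ)-1) (i - ((n+1):ℕ)) (j - 2*((n+1):ℕ) + 1)
        = phi (n:ℤ) (i - 1 - n) (j - 1 - 2*n) := phi_congr (by push_cast; ring) (by push_cast; ring) (by push_cast; ring)
    have e2 : phi ((((n+1):ℕ):ℤ)-1) (i - ((n+1):ℕ)) (j - 2*((n+1):ℕ))
        = phi (n:ℤ) (i - 1 - n) (j - 2 - 2*n) := phi_congr (by push_cast; ring) (by push_cast; ring) (by push_cast; ring)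
    rw [e1, e2]
    push_cast
    ring
  rw [hS1, hS2, Finset.mul_sum, ← Finset.sum_add_distrib, ← Finset.sum_add_distrib]
  apply Finset.sum_congr rfl
  intro n _
  have e1 : phi (n:ℤ) (i - n - 1) (j - 2*n - 1) = phi (n:ℤ) (i - 1 - n) (j - 1 - 2*n) :=
    phi_congr rfl (by ring) (by ring)
  rw [e1]
  push_cast
  ring

lemma S2_eq_zero : ∀ {m l : ℕ}, m < l → S2 m l = 0 := by
  intro m
  induction m with
  | zero => intro l h; cases l with | zero => omega | succ l => rfl
  | succ m ih =>
    intro l h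
    cases l with
    | zero => omega
    | succ l =>
      rw [show S2 (m+1) (l+1) = (l+1) * S2 m (l+1) + S2 m l from rfl,
          ih (by omega), ih (by omega)]
      ring

lemma S2_self (m : ℕ) : S2 m m = 1 := by
  induction m with
  | zero => rfl
  | succ m ih =>
    rw [show S2 (m+1) (m+1) = (m+1) * S2 m (m+1) + S2 m m from rfl,
        S2_eq_zero (by omega), ih]
    ring

lemma descFactorial_cast_succ (r j : ℕ) :
    ((r.descFactorial (j+1) : ℚ)) = ((r:ℚ) - j) * r.descFactorial j := by
  by_cases h : j ≤ r
  · rw [Nat.descFactorial_succ, Nat.cast_mul, Nat.cast_sub h]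
  · rw [Nat.descFactorial_of_lt (by omega), Nat.descFactorial_of_lt (by omega)]
    push_cast
    ring

noncomputable def Lq (r : ℕ) (i : ℤ) : ℚ :=
  ∑ j ∈ Finset.range (r+1), (r.descFactorial j : ℚ) * G i j

lemma Lq_key (r : ℕ) (i : ℤ) :
    Lq (r+1) i = ((r:ℚ) + 1 - i) * Lq r (i-1) + Lq r i := by
  unfold Lq
  rw [Finset.sum_range_succ']
  push_cast
  have hterm : ∀ j : ℕ, ((r+1).descFactorial (j+1) : ℚ) * G i ((j:ℤ)+1)
      = (r.descFactorial (j+1) : ℚ) * G i ((j:ℤ)+1)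
        + (r.descFactorial j : ℚ) * (((j:ℚ)+1-i) * G (i-1) j + G (i-1) ((j:ℤ)-1)) := by
    intro j
    have hd : (((r+1).descFactorial (j+1) : ℕ) : ℚ) = ((r:ℚ)+1) * r.descFactorial j := by
      rw [Nat.succ_descFactorial_succ]; push_cast; ring
    have hG := G_rec i ((j:ℤ)+1)
    have e1 : G (i-1) ((j:ℤ)+1-1) = G (i-1) (j:ℤ) := by congr 1; ring
    have e2 : G (i-1) ((j:ℤ)+1-2) = G (i-1) ((j:ℤ)-1) := by congr 1; ring
    rw [e1, e2] at hG
    push_cast at hG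
    have hd2 := descFactorial_cast_succ r j
    linear_combination G i ((j:ℤ)+1) * hd - G i ((j:ℤ)+1) * hd2 + (r.descFactorial j : ℚ) * hG
  rw [Finset.sum_congr rfl (fun j (_ : j ∈ Finset.range (r+1)) => hterm j),
      Finset.sum_add_distrib]
  -- first part reassembles to Lq r i
  have hA : (∑ j ∈ Finset.range (r+1), (r.descFactorial (j+1) : ℚ) * G i ((j:ℤ)+1)) + G i 0
      = ∑ j ∈ Finset.range (r+1), (r.descFactorial j : ℚ) * G i j := by
    have h1 := Finset.sum_range_succ' (fun j : ℕ => (r.descFactorial j : ℚ) * G i j) (r+1)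
    rw [Finset.sum_range_succ] at h1
    rw [Nat.descFactorial_of_lt (show r < r + 1 by omega)] at h1
    simp only [Nat.descFactorial_zero, Nat.cast_one, one_mul, Nat.cast_zero, zero_mul] at h1
    push_cast at h1
    linarith [h1]
  -- second part
  have hB : ∑ j ∈ Finset.range (r+1),
        (r.descFactorial j : ℚ) * (((j:ℚ)+1-i) * G (i-1) j + G (i-1) ((j:ℤ)-1))
      = ((r:ℚ)+1-i) * ∑ j ∈ Finset.range (r+1), (r.descFactorial j : ℚ) * G (i-1) j := by
    rw [Finset.mul_sum]
    have hC : ∑ j ∈ Finset.range (r+1), (r.descFactorial j : ℚ) * G (i-1) ((j:ℤ)-1)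
        = ∑ j ∈ Finset.range (r+1), ((r:ℚ) - j) * (r.descFactorial j : ℚ) * G (i-1) j := by
      rw [Finset.sum_range_succ' (fun j : ℕ => (r.descFactorial j : ℚ) * G (i-1) ((j:ℤ)-1)) r,
          Finset.sum_range_succ (fun j : ℕ => ((r:ℚ) - j) * (r.descFactorial j : ℚ) * G (i-1) j) r]
      have hz1 : (r.descFactorial 0 : ℚ) * G (i-1) (((0:ℕ):ℤ)-1) = 0 := by
        rw [G_neg_j (show ((0:ℕ):ℤ)-1 < 0 by norm_num), mul_zero]
      have hz2 : ((r:ℚ) - (r:ℚ)) * (r.descFactorial r : ℚ) * G (i-1) r = 0 := by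
        ring_nf
      rw [hz1, hz2, add_zero, add_zero]
      apply Finset.sum_congr rfl
      intro j _
      have e : G (i-1) ((((j+1):ℕ):ℤ)-1) = G (i-1) (j:ℤ) := by congr 1; omega
      rw [e, descFactorial_cast_succ]
    have hsplit := Finset.sum_add_distrib (s := Finset.range (r+1))
      (f := fun j : ℕ => ((j:ℚ)+1-i) * ((r.descFactorial j : ℚ) * G (i-1) j))
      (g := fun j : ℕ => (r.descFactorial j : ℚ) * G (i-1) ((j:ℤ)-1))
    calc ∑ j ∈ Finset.range (r+1),
          (r.descFactorial j : ℚ) * (((j:ℚ)+1-i) * G (i-1) j + G (i-1) ((j:ℤ)-1))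
        = ∑ j ∈ Finset.range (r+1),
            (((j:ℚ)+1-i) * ((r.descFactorial j : ℚ) * G (i-1) j)
              + (r.descFactorial j : ℚ) * G (i-1) ((j:ℤ)-1)) := by
          apply Finset.sum_congr rfl; intro j _; ring
      _ = (∑ j ∈ Finset.range (r+1), ((j:ℚ)+1-i) * ((r.descFactorial j : ℚ) * G (i-1) j))
            + ∑ j ∈ Finset.range (r+1), (r.descFactorial j : ℚ) * G (i-1) ((j:ℤ)-1) := hsplit
      _ = (∑ j ∈ Finset.range (r+1), ((j:ℚ)+1-i) * ((r.descFactorial j : ℚ) * G (i-1) j))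
            + ∑ j ∈ Finset.range (r+1), ((r:ℚ) - j) * (r.descFactorial j : ℚ) * G (i-1) j := by
          rw [hC]
      _ = ∑ j ∈ Finset.range (r+1), (((j:ℚ)+1-i) * ((r.descFactorial j : ℚ) * G (i-1) j)
            + ((r:ℚ) - j) * (r.descFactorial j : ℚ) * G (i-1) j) := (Finset.sum_add_distrib).symm
      _ = ∑ j ∈ Finset.range (r+1), ((r:ℚ)+1-i) * ((r.descFactorial j : ℚ) * G (i-1) j) := by
          apply Finset.sum_congr rfl; intro j _; ring
      _ = _ := by rw [← Finset.mul_sum, Finset.mul_sum]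
  rw [hB]
  simp only [Nat.descFactorial_zero, Nat.cast_one, one_mul]
  push_cast at hA ⊢
  linarith [hA]

lemma Lq_zero (i : ℤ) : Lq 0 i = if i = 0 then 1 else 0 := by
  unfold Lq
  rw [Finset.sum_range_one]
  rw [Nat.descFactorial_zero]
  push_cast
  rw [one_mul]
  exact G_zero i

lemma Lq_eq : ∀ (r : ℕ) (i : ℤ),
    Lq r i = if 0 ≤ i ∧ i ≤ (r:ℤ) then (S2 r (r - i.toNat) : ℚ) else 0 := by
  intro r
  induction r with
  | zero =>
    intro i
    rw [Lq_zero]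
    by_cases h : i = 0
    · subst h
      rw [if_pos rfl, if_pos (by omega)]
      norm_num
      rw [S2_self]
      norm_num
    · rw [if_neg h, if_neg (by omega)]
  | succ r ih =>
    intro i
    rw [Lq_key, ih (i-1), ih i]
    by_cases h0 : 0 ≤ i
    case neg =>
      rw [if_neg (by omega), if_neg (by omega), if_neg (by omega)]
      ring
    obtain ⟨t, rfl⟩ : ∃ t : ℕ, i = (t:ℤ) := ⟨i.toNat, by omega⟩
    by_cases hle : t ≤ r + 1
    case neg =>
      rw [if_neg (by omega), if_neg (by omega), if_neg (by omega)]
      ring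
    rcases Nat.eq_zero_or_pos t with rfl | ht1
    · rw [if_neg (by omega), if_pos (by omega), if_pos (by omega)]
      have e1 : (((0:ℕ):ℤ)).toNat = 0 := by omega
      rw [e1]
      have e2 : r - 0 = r := by omega
      have e3 : r + 1 - 0 = r + 1 := by omega
      rw [e2, e3, S2_self, S2_self]
      ring
    by_cases ht2 : t ≤ r
    · rw [if_pos (by omega), if_pos (by omega), if_pos (by omega)]
      have e1 : ((t:ℤ)-1).toNat = t-1 := by omega
      have e2 : ((t:ℤ)).toNat = t := by omega
      rw [e1, e2]
      have e3 : r + 1 - t = (r - t) + 1 := by omega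
      have e4 : r - (t-1) = (r - t) + 1 := by omega
      rw [e3, e4]
      rw [show S2 (r+1) ((r-t)+1) = ((r-t)+1) * S2 r ((r-t)+1) + S2 r (r-t) from rfl]
      have hco : ((r:ℚ) + 1 - ((t:ℤ):ℚ)) = (((r-t)+1 : ℕ):ℚ) := by
        push_cast [Nat.cast_sub ht2]
        ring
      rw [hco]
      push_cast
      ring
    · obtain rfl : t = r + 1 := by omega
      rw [if_pos (by omega), if_neg (by omega), if_pos (by omega)]
      have e1 : (((r+1:ℕ):ℤ)).toNat = r + 1 := by omega
      rw [e1]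
      have e2 : r + 1 - (r + 1) = 0 := by omega
      rw [e2]
      rw [show S2 (r+1) 0 = 0 from rfl]
      have hco : ((r:ℚ) + 1 - (((r+1:ℕ):ℤ):ℚ)) = 0 := by push_cast; ring
      rw [hco]
      push_cast
      ring


/-- `∑_{j≥0} (r)_j · (∑_{n≥0} φ(n, i-n, j-2n)) = S(r, r-i)` for `0 ≤ i ≤ r`, where `S` is the
Stirling number of the second kind. The sums are `finsum`s with finite support. -/
theorem stmt10 (r i : ℕ) (hi : i ≤ r) :
    ∑ᶠ j : ℕ, (r.descFactorial j : ℚ)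
        * ∑ᶠ n : ℕ, phi (n : ℤ) ((i : ℤ) - (n : ℤ)) ((j : ℤ) - 2 * (n : ℤ))
      = (S2 r (r - i) : ℚ) := by
  have hfin : ∑ᶠ j : ℕ, ((r.descFactorial j : ℚ) * G (i:ℤ) (j:ℤ)) = Lq r (i:ℤ) := by
    apply finsum_eq_sum_of_support_subset
    intro j hj
    simp only [Function.mem_support] at hj
    simp only [Finset.coe_range, Set.mem_Iio]
    by_contra hc
    apply hj
    rw [Nat.descFactorial_of_lt (by omega)]
    push_cast
    ring
  have hG : (∑ᶠ j : ℕ, (r.descFactorial j : ℚ)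
        * ∑ᶠ n : ℕ, phi (n : ℤ) ((i : ℤ) - (n : ℤ)) ((j : ℤ) - 2 * (n : ℤ)))
      = ∑ᶠ j : ℕ, ((r.descFactorial j : ℚ) * G (i:ℤ) (j:ℤ)) := rfl
  rw [hG, hfin, Lq_eq r (i:ℤ), if_pos (by omega)]
  have e1 : ((i:ℤ)).toNat = i := by omega
  rw [e1]
end
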